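/- (Blaschke condition) Let f be a bounded analytic function on the open unit disc D with f(0) ≠ 0, and let {a_n} be the sequence of zeros of f in D, each repeated according to multiplicity. Then ∑_n (1 − |a_n|) < ∞. -/

import Mathlib

open Metric Set Topology Filter

lemma bl_sq (a z : ℂ) :
    ‖1 - (starRingEnd ℂ) a * z‖ ^ 2 = ‖z - a‖ ^ 2 + (1 - ‖z‖ ^ 2) * (1 - ‖a‖ ^ 2) := by
  simp only [Complex.sq_norm, Complex.normSq_apply, Complex.sub_re,
    Complex.sub_im, Complex.mul_re, Complex.mul_im, Complex.one_re, Complex.one_im,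
    Complex.conj_re, Complex.conj_im]
  ring

lemma bl_est {a z : ℂ} (h2 : ‖z‖ ≤ 1) :
    ‖1 - (starRingEnd ℂ) a * z‖ ≤ ‖z - a‖ + Real.sqrt (1 - ‖z‖ ^ 2) := by
  have hz2 : (0:ℝ) ≤ 1 - ‖z‖ ^ 2 := by nlinarith [norm_nonneg z]
  have hs : Real.sqrt (1 - ‖z‖ ^ 2) ^ 2 = 1 - ‖z‖ ^ 2 := Real.sq_sqrt hz2
  have h := bl_sq a z
  have key : ‖1 - (starRingEnd ℂ) a * z‖ ^ 2 ≤ (‖z - a‖ + Real.sqrt (1 - ‖z‖ ^ 2)) ^ 2 := by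
    nlinarith [norm_nonneg (z - a), Real.sqrt_nonneg (1 - ‖z‖ ^ 2), norm_nonneg a]
  have hnn : (0:ℝ) ≤ ‖z - a‖ + Real.sqrt (1 - ‖z‖ ^ 2) :=
    add_nonneg (norm_nonneg _) (Real.sqrt_nonneg _)
  calc ‖1 - (starRingEnd ℂ) a * z‖ = Real.sqrt (‖1 - (starRingEnd ℂ) a * z‖ ^ 2) :=
        (Real.sqrt_sq (norm_nonneg _)).symm
    _ ≤ Real.sqrt ((‖z - a‖ + Real.sqrt (1 - ‖z‖ ^ 2)) ^ 2) := Real.sqrt_le_sqrt key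
    _ = _ := Real.sqrt_sq hnn

lemma bl_diff_prod (S : Finset ℕ) (a : ℕ → ℂ) :
    Differentiable ℂ (fun z => ∏ n ∈ S, (1 - (starRingEnd ℂ) (a n) * z)) := by
  induction S using Finset.induction with
  | empty => simp
  | @insert m S' hm ih =>
    simp only [Finset.prod_insert hm]
    exact ((differentiable_const 1).sub ((differentiable_const _).mul differentiable_id)).mul ih

lemma bl_factor (f : ℂ → ℂ) (hd : DifferentiableOn ℂ f (ball (0 : ℂ) 1))
    (a : ℕ → ℂ) (ha : ∀ n, a n ∈ ball (0 : ℂ) 1) (hz : ∀ n, f (a n) = 0)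
    (hinj : Function.Injective a) (S : Finset ℕ) :
    ∃ g : ℂ → ℂ, DifferentiableOn ℂ g (ball (0 : ℂ) 1) ∧
      ∀ z, f z = g z * ∏ n ∈ S, (z - a n) := by
  induction S using Finset.induction with
  | empty => exact ⟨f, hd, fun z => by simp⟩
  | @insert m S' hm ih =>
    obtain ⟨g, hg, hfg⟩ := ih
    have hgm : g (a m) = 0 := by
      have h1 := hfg (a m)
      rw [hz m] at h1
      have h2 : ∏ n ∈ S', (a m - a n) ≠ 0 := by
        refine Finset.prod_ne_zero_iff.2 fun n hn => sub_ne_zero.2 ?_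
        exact fun h => hm (hinj h ▸ hn)
      exact (mul_eq_zero.1 h1.symm).resolve_right h2
    refine ⟨dslope g (a m), ?_, fun z => ?_⟩
    · exact (Complex.differentiableOn_dslope (isOpen_ball.mem_nhds (ha m))).2 hg
    · have h3 : (z - a m) • dslope g (a m) z = g z - g (a m) := sub_smul_dslope g (a m) z
      rw [hgm, sub_zero, smul_eq_mul] at h3
      rw [hfg z, Finset.prod_insert hm, ← h3]
      ring

lemma bl_key (f : ℂ → ℂ) (hd : DifferentiableOn ℂ f (ball (0 : ℂ) 1))
    {M : ℝ} (hM : ∀ z ∈ ball (0 : ℂ) 1, ‖f z‖ ≤ M)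
    (a : ℕ → ℂ) (ha : ∀ n, a n ∈ ball (0 : ℂ) 1) (hz : ∀ n, f (a n) = 0)
    (hinj : Function.Injective a) (S : Finset ℕ) :
    ‖f 0‖ ≤ M * ∏ n ∈ S, ‖a n‖ := by
  obtain ⟨g, hg, hfg⟩ := bl_factor f hd a ha hz hinj S
  set G : ℂ → ℂ := fun z => g z * ∏ n ∈ S, (1 - (starRingEnd ℂ) (a n) * z) with hGdef
  have hGd : DifferentiableOn ℂ G (ball (0 : ℂ) 1) :=
    hg.mul ((bl_diff_prod S a).differentiableOn)
  -- norms of zeros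
  have han : ∀ n, ‖a n‖ < 1 := by
    intro n; have := ha n; rwa [mem_ball_zero_iff] at this
  -- relation at 0
  have hG0 : ‖f 0‖ = ‖G 0‖ * ∏ n ∈ S, ‖a n‖ := by
    have h1 : f 0 = g 0 * ∏ n ∈ S, (0 - a n) := hfg 0
    have h2 : G 0 = g 0 := by
      simp [hGdef]
    rw [h1, norm_mul, norm_prod, h2]
    congr 1
    exact Finset.prod_congr rfl fun n _ => by rw [zero_sub, norm_neg]
  have hprodnn : (0:ℝ) ≤ ∏ n ∈ S, ‖a n‖ := Finset.prod_nonneg fun n _ => norm_nonneg _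
  -- main bound : ‖G 0‖ ≤ M
  have hG0le : ‖G 0‖ ≤ M := by
    -- choose t
    obtain ⟨t, ht0, ht1, htS⟩ : ∃ t : ℝ, 0 ≤ t ∧ t < 1 ∧ ∀ n ∈ S, ‖a n‖ ≤ t := by
      classical
      set T : Finset ℝ := insert (0:ℝ) (S.image fun n => ‖a n‖) with hT
      have hTne : T.Nonempty := ⟨0, Finset.mem_insert_self _ _⟩
      refine ⟨T.max' hTne, Finset.le_max' _ _ (Finset.mem_insert_self _ _), ?_, fun n hn => ?_⟩
      · refine (Finset.max'_lt_iff T hTne (x := 1)).2 fun x hx => ?_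
        rcases Finset.mem_insert.1 hx with rfl | hx
        · exact one_pos
        · obtain ⟨n, _, rfl⟩ := Finset.mem_image.1 hx
          exact han n
      · exact Finset.le_max' T ‖a n‖
          (Finset.mem_insert_of_mem (Finset.mem_image_of_mem (fun n => ‖a n‖) hn))
    -- for every r in Ioo t 1
    have hbound : ∀ r ∈ Ioo t 1,
        ‖G 0‖ ≤ M * ∏ n ∈ S, (1 + Real.sqrt (1 - r ^ 2) / (r - ‖a n‖)) := by
      intro r hr
      obtain ⟨hrt, hr1⟩ := hr
      have hr0 : 0 < r := lt_of_le_of_lt ht0 hrt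
      have hsub : closedBall (0:ℂ) r ⊆ ball (0:ℂ) 1 := by
        intro x hx
        rw [mem_closedBall_zero_iff] at hx
        rw [mem_ball_zero_iff]
        exact lt_of_le_of_lt hx hr1
      refine Complex.norm_le_of_forall_mem_frontier_norm_le (isBounded_ball) ?_ ?_
        (subset_closure (mem_ball_self hr0))
      · refine DifferentiableOn.diffContOnCl ?_
        rw [closure_ball (0:ℂ) hr0.ne']
        exact hGd.mono hsub
      · intro w hw
        rw [frontier_ball (0:ℂ) hr0.ne', mem_sphere_zero_iff_norm] at hw
        have hwball : w ∈ ball (0:ℂ) 1 := by rw [mem_ball_zero_iff, hw]; exact hr1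
        -- ‖z - a n‖ ≥ r - ‖a n‖ > 0
        have hfac : ∀ n ∈ S, ‖1 - (starRingEnd ℂ) (a n) * w‖ ≤
            (1 + Real.sqrt (1 - r ^ 2) / (r - ‖a n‖)) * ‖w - a n‖ := by
          intro n hn
          have hlt : ‖a n‖ < r := lt_of_le_of_lt (htS n hn) hrt
          have hpos : 0 < r - ‖a n‖ := by linarith
          have hge : r - ‖a n‖ ≤ ‖w - a n‖ := by
            have := norm_sub_norm_le w (a n)
            rw [hw] at this
            linarith
          have h1 := bl_est (a := a n) (z := w) (by rw [hw]; exact hr1.le)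
          rw [hw] at h1
          have h2 : Real.sqrt (1 - r ^ 2) ≤ Real.sqrt (1 - r ^ 2) / (r - ‖a n‖) * ‖w - a n‖ := by
            rw [div_mul_eq_mul_div, le_div_iff₀ hpos]
            exact mul_le_mul_of_nonneg_left hge (Real.sqrt_nonneg _)
          calc ‖1 - (starRingEnd ℂ) (a n) * w‖ ≤ ‖w - a n‖ + Real.sqrt (1 - r ^ 2) := h1
            _ ≤ ‖w - a n‖ + Real.sqrt (1 - r ^ 2) / (r - ‖a n‖) * ‖w - a n‖ := by linarith
            _ = (1 + Real.sqrt (1 - r ^ 2) / (r - ‖a n‖)) * ‖w - a n‖ := by ring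
        have hprod : ∏ n ∈ S, ‖1 - (starRingEnd ℂ) (a n) * w‖ ≤
            ∏ n ∈ S, ((1 + Real.sqrt (1 - r ^ 2) / (r - ‖a n‖)) * ‖w - a n‖) :=
          Finset.prod_le_prod (fun n _ => norm_nonneg _) hfac
        have hGw : ‖G w‖ = ‖g w‖ * ∏ n ∈ S, ‖1 - (starRingEnd ℂ) (a n) * w‖ := by
          rw [hGdef]; simp [norm_mul, norm_prod]
        have hfw : ‖f w‖ = ‖g w‖ * ∏ n ∈ S, ‖w - a n‖ := by
          rw [hfg w, norm_mul, norm_prod]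
        calc ‖G w‖ = ‖g w‖ * ∏ n ∈ S, ‖1 - (starRingEnd ℂ) (a n) * w‖ := hGw
          _ ≤ ‖g w‖ * ∏ n ∈ S, ((1 + Real.sqrt (1 - r ^ 2) / (r - ‖a n‖)) * ‖w - a n‖) :=
              mul_le_mul_of_nonneg_left hprod (norm_nonneg _)
          _ = (∏ n ∈ S, (1 + Real.sqrt (1 - r ^ 2) / (r - ‖a n‖))) * (‖g w‖ * ∏ n ∈ S, ‖w - a n‖) := by
              rw [Finset.prod_mul_distrib]; ring
          _ = (∏ n ∈ S, (1 + Real.sqrt (1 - r ^ 2) / (r - ‖a n‖))) * ‖f w‖ := by rw [hfw]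
          _ ≤ (∏ n ∈ S, (1 + Real.sqrt (1 - r ^ 2) / (r - ‖a n‖))) * M := by
              refine mul_le_mul_of_nonneg_left (hM w hwball) ?_
              refine Finset.prod_nonneg fun n hn => ?_
              have hlt : ‖a n‖ < r := lt_of_le_of_lt (htS n hn) hrt
              have : 0 ≤ Real.sqrt (1 - r ^ 2) / (r - ‖a n‖) :=
                div_nonneg (Real.sqrt_nonneg _) (by linarith)
              linarith
          _ = M * ∏ n ∈ S, (1 + Real.sqrt (1 - r ^ 2) / (r - ‖a n‖)) := mul_comm _ _
    -- take the limit r → 1⁻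
    have hne : (𝓝[Ioo t (1:ℝ)] 1).NeBot := right_nhdsWithin_Ioo_neBot ht1
    have htend : Filter.Tendsto (fun r : ℝ => M * ∏ n ∈ S, (1 + Real.sqrt (1 - r ^ 2) / (r - ‖a n‖)))
        (𝓝[Ioo t (1:ℝ)] 1) (𝓝 (M * ∏ n ∈ S, (1:ℝ))) := by
      refine Filter.Tendsto.mul tendsto_const_nhds ?_
      refine tendsto_finset_prod _ fun n _ => ?_
      have h1 : Filter.Tendsto (fun r : ℝ => 1 + Real.sqrt (1 - r ^ 2) / (r - ‖a n‖)) (𝓝 (1:ℝ))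
          (𝓝 (1 + Real.sqrt (1 - 1 ^ 2) / (1 - ‖a n‖))) := by
        have hcont : ContinuousAt (fun r : ℝ => 1 + Real.sqrt (1 - r ^ 2) / (r - ‖a n‖)) 1 := by
          refine continuousAt_const.add (ContinuousAt.div ?_ ?_ ?_)
          · exact (Real.continuous_sqrt.comp (by continuity)).continuousAt
          · exact (continuous_id.sub continuous_const).continuousAt
          · simpa using sub_ne_zero.2 (han n).ne'
        exact hcont
      have h2 : (1 : ℝ) + Real.sqrt (1 - 1 ^ 2) / (1 - ‖a n‖) = 1 := by norm_num
      rw [h2] at h1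
      exact h1.mono_left nhdsWithin_le_nhds
    have := ge_of_tendsto htend (Filter.eventually_inf_principal.2 (Filter.Eventually.of_forall hbound))
    simpa using this
  calc ‖f 0‖ = ‖G 0‖ * ∏ n ∈ S, ‖a n‖ := hG0
    _ ≤ M * ∏ n ∈ S, ‖a n‖ := mul_le_mul_of_nonneg_right hG0le hprodnn

/-- Blaschke condition: the (distinct) zeros `a n` of a bounded analytic
function `f` on the unit disc with `f 0 ≠ 0` satisfy `∑ (1 - |a n|) < ∞`. -/
theorem stmt_7 (f : ℂ → ℂ) (hd : DifferentiableOn ℂ f (ball (0 : ℂ) 1))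
    (hb : ∃ M : ℝ, ∀ z ∈ ball (0 : ℂ) 1, ‖f z‖ ≤ M)
    (h0 : f 0 ≠ 0)
    (a : ℕ → ℂ) (ha : ∀ n, a n ∈ ball (0 : ℂ) 1) (hz : ∀ n, f (a n) = 0)
    (hinj : Function.Injective a) :
    Summable (fun n => 1 - ‖a n‖) := by
  obtain ⟨M, hM⟩ := hb
  have hf0 : 0 < ‖f 0‖ := norm_pos_iff.2 h0
  have hMpos : 0 < M := lt_of_lt_of_le hf0 (hM 0 (mem_ball_self one_pos))
  have han0 : ∀ n, a n ≠ 0 := fun n h => h0 (h ▸ hz n)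
  have hanpos : ∀ n, 0 < ‖a n‖ := fun n => norm_pos_iff.2 (han0 n)
  have han1 : ∀ n, ‖a n‖ < 1 := fun n => mem_ball_zero_iff.1 (ha n)
  have hnn : (0 : ℕ → ℝ) ≤ fun n => 1 - ‖a n‖ := fun n => by
    simp only [Pi.zero_apply]
    linarith [han1 n]
  refine summable_of_sum_le (c := Real.log M - Real.log ‖f 0‖) hnn (fun u => ?_)
  · have key := bl_key f hd hM a ha hz hinj u
    have hprodpos : 0 < ∏ n ∈ u, ‖a n‖ := Finset.prod_pos fun n _ => hanpos n
    have hlog : Real.log ‖f 0‖ ≤ Real.log M + Real.log (∏ n ∈ u, ‖a n‖) := by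
      have := Real.log_le_log hf0 key
      rwa [Real.log_mul hMpos.ne' hprodpos.ne'] at this
    have hlogprod : Real.log (∏ n ∈ u, ‖a n‖) = ∑ n ∈ u, Real.log ‖a n‖ :=
      Real.log_prod (s := u) fun n _ => (hanpos n).ne'
    have hterm : ∀ n ∈ u, 1 - ‖a n‖ ≤ -Real.log ‖a n‖ := by
      intro n _
      have := Real.log_le_sub_one_of_pos (hanpos n)
      linarith
    calc ∑ n ∈ u, (1 - ‖a n‖) ≤ ∑ n ∈ u, -Real.log ‖a n‖ :=
          Finset.sum_le_sum hterm
      _ = -(∑ n ∈ u, Real.log ‖a n‖) := by rw [Finset.sum_neg_distrib]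
      _ = -Real.log (∏ n ∈ u, ‖a n‖) := by rw [hlogprod]
      _ ≤ Real.log M - Real.log ‖f 0‖ := by linarith
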